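/- Under common preferences, a homogeneous arrangement (l,k) is adequate if and only if l = k or both l ≥ min{|D|,|H|} and k ≥ min{|D|,|H|}. -/

import Mathlib

/- Formal model of the two-step interview-then-match process of
Echenique-et-al-style markets: Step 1 computes the interview matching by
hospital-proposing deferred acceptance (with responsive, capacity-constrained
choice functions); Step 2 computes the final one-to-one matching by
doctor-proposing deferred acceptance on preferences restricted to interview
partners. -/

open Finset

section Model

variable {D H : Type*} [Fintype D] [Fintype H] [DecidableEq D] [DecidableEq H]

/-- The (at most) `n` best elements of `s` according to `rank` (lower rank = better). -/
def topN {α : Type*} [DecidableEq α] (rank : α → ℕ) (n : ℕ) (s : Finset α) : Finset α :=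
  s.filter fun x => (s.filter fun y => rank y < rank x).card < n

/-- A market: strict preferences represented by rank functions
(lower rank = more preferred) together with acceptability predicates. -/
structure Market (D H : Type*) where
  rankDH : D → H → ℕ
  accD : D → H → Bool
  rankHD : H → D → ℕ
  accH : H → D → Bool

/-- Strict preferences: rank functions are injective. -/
def Market.Strict (M : Market D H) : Prop :=
  (∀ d, Function.Injective (M.rankDH d)) ∧ (∀ h, Function.Injective (M.rankHD h))

/-- Hospital `h` proposes to its `ι h` best acceptable doctors that have not rejected it. -/
def hProps (M : Market D H) (ι : H → ℕ) (R : Finset (H × D)) (h : H) : Finset D :=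
  topN (M.rankHD h) (ι h) (univ.filter fun d => M.accH h d ∧ (h, d) ∉ R)

/-- Doctor `d` keeps her `κ d` best acceptable proposals. -/
def dKeeps (M : Market D H) (ι : H → ℕ) (κ : D → ℕ) (R : Finset (H × D)) (d : D) :
    Finset H :=
  topN (fun h => M.rankDH d h) (κ d) (univ.filter fun h => M.accD d h ∧ d ∈ hProps M ι R h)

/-- One round of hospital-proposing deferred acceptance: the (cumulative) rejection set
grows by the proposals not kept. -/
def iStep (M : Market D H) (ι : H → ℕ) (κ : D → ℕ) (R : Finset (H × D)) :
    Finset (H × D) :=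
  R ∪ univ.filter fun p : H × D => p.2 ∈ hProps M ι R p.1 ∧ p.1 ∉ dKeeps M ι κ R p.2

/-- Rejection set at the end of hospital-proposing DA (interview step). -/
def iRej (M : Market D H) (ι : H → ℕ) (κ : D → ℕ) : Finset (H × D) :=
  (iStep M ι κ)^[Fintype.card D * Fintype.card H] ∅

/-- The interview matching (the hospital-optimal stable many-to-many matching) computed
by hospital-proposing deferred acceptance: pairs `(h, d)` such that `h` interviews `d`. -/
def interviews (M : Market D H) (ι : H → ℕ) (κ : D → ℕ) : Finset (H × D) :=
  univ.filter fun p : H × D =>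
    p.2 ∈ hProps M ι (iRej M ι κ) p.1 ∧ p.1 ∈ dKeeps M ι κ (iRej M ι κ) p.2

/-- Doctor `d` proposes to her best interview partner that has not rejected her. -/
def dProps (M : Market D H) (V : Finset (H × D)) (S : Finset (D × H)) (d : D) :
    Finset H :=
  topN (M.rankDH d) 1 (univ.filter fun h => (h, d) ∈ V ∧ (d, h) ∉ S)

/-- Hospital `h` keeps its best proposal. -/
def hKeeps (M : Market D H) (V : Finset (H × D)) (S : Finset (D × H)) (h : H) :
    Finset D :=
  topN (M.rankHD h) 1 (univ.filter fun d => h ∈ dProps M V S d)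

/-- One round of doctor-proposing DA on preferences restricted to the interview matching `V`. -/
def mStep (M : Market D H) (V : Finset (H × D)) (S : Finset (D × H)) : Finset (D × H) :=
  S ∪ univ.filter fun p : D × H => p.2 ∈ dProps M V S p.1 ∧ p.1 ∉ hKeeps M V S p.2

/-- Rejection set at the end of the doctor-proposing DA of the matching step. -/
def mRej (M : Market D H) (V : Finset (H × D)) : Finset (D × H) :=
  (mStep M V)^[Fintype.card D * Fintype.card H] ∅

/-- The final matching: doctor-proposing DA on preferences restricted to interviews `V`. -/
def finalMatch (M : Market D H) (V : Finset (H × D)) : Finset (D × H) :=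
  univ.filter fun p : D × H =>
    p.2 ∈ dProps M V (mRej M V) p.1 ∧ p.1 ∈ hKeeps M V (mRej M V) p.2

/-- The `(ι,κ)`-matching: the culmination of the two-step process. -/
def ikMatching (M : Market D H) (ι : H → ℕ) (κ : D → ℕ) : Finset (D × H) :=
  finalMatch M (interviews M ι κ)

/-- `(d, h)` is a blocking pair of `μ` (w.r.t. the true, unrestricted preferences). -/
def Blocks (M : Market D H) (μ : Finset (D × H)) (d : D) (h : H) : Prop :=
  M.accD d h ∧ M.accH h d ∧ (d, h) ∉ μ ∧
    (∀ h', (d, h') ∈ μ → M.rankDH d h < M.rankDH d h') ∧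
    (∀ d', (d', h) ∈ μ → M.rankHD h d < M.rankHD h d')

instance (M : Market D H) (μ : Finset (D × H)) (d : D) (h : H) :
    Decidable (Blocks M μ d h) := by
  unfold Blocks; infer_instance

/-- A matching is stable if it admits no blocking pair. -/
def Stable (M : Market D H) (μ : Finset (D × H)) : Prop := ∀ d h, ¬ Blocks M μ d h

/-- `(ι,κ)` is adequate at `M` if the `(ι,κ)`-matching is stable. -/
def Adequate (M : Market D H) (ι : H → ℕ) (κ : D → ℕ) : Prop :=
  Stable M (ikMatching M ι κ)

/-- One-to-one matching (as a set of pairs). -/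
def IsMatching (μ : Finset (D × H)) : Prop :=
  (∀ d h h', (d, h) ∈ μ → (d, h') ∈ μ → h = h') ∧
    (∀ d d' h, (d, h) ∈ μ → (d', h) ∈ μ → d = d')

/-- Common preferences: all doctors rank the hospitals identically, all hospitals rank
the doctors identically, everyone is mutually acceptable (and preferences are strict). -/
def CommonPrefs (M : Market D H) : Prop :=
  M.Strict ∧ (∀ d d', M.rankDH d = M.rankDH d') ∧ (∀ h h', M.rankHD h = M.rankHD h') ∧
    ∀ d h, M.accD d h ∧ M.accH h d

/-- Number of hospitals matched under `μ`. -/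
def matchedHospitals (μ : Finset (D × H)) : ℕ :=
  (univ.filter fun h : H => ∃ d, (d, h) ∈ μ).card

/-- Number of blocking pairs of `μ`. -/
def blockingCount (M : Market D H) (μ : Finset (D × H)) : ℕ :=
  (univ.filter fun p : D × H => Blocks M μ p.1 p.2).card

end Model

/-- `(ι,κ)` is globally adequate: adequate at every (strict) preference profile. -/
def GloballyAdequate (D H : Type*) [Fintype D] [Fintype H] [DecidableEq D] [DecidableEq H]
    (ι : H → ℕ) (κ : D → ℕ) : Prop :=
  ∀ M : Market D H, M.Strict → Adequate M ι κ

variable {D H : Type*} [Fintype D] [Fintype H] [DecidableEq D] [DecidableEq H]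

/- ===================== Auxiliary development ===================== -/

set_option linter.unusedSectionVars false
set_option maxHeartbeats 1000000

section RkPos
variable {α : Type*} [Fintype α] [DecidableEq α] (f : α → ℕ)

/-- Position (0-indexed rank) of `x` under rank function `f`. -/
def rkpos (x : α) : ℕ := (univ.filter fun y => f y < f x).card

variable {f}

lemma rkpos_mono {x y : α} (h : f x < f y) : rkpos f x < rkpos f y := by
  have hsub : (univ.filter fun z => f z < f x) ⊆ (univ.filter fun z => f z < f y) := by
    intro z hz; simp only [mem_filter, mem_univ, true_and] at *; omega
  exact Finset.card_lt_card ((Finset.ssubset_iff_of_subset hsub).mpr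
    ⟨x, by simp [h], by simp⟩)

lemma rkpos_anti {x y : α} (h : f x ≤ f y) : rkpos f x ≤ rkpos f y := by
  apply Finset.card_le_card
  intro z hz; simp only [mem_filter, mem_univ, true_and] at *; omega

lemma rkpos_lt_iff {x y : α} : rkpos f x < rkpos f y ↔ f x < f y := by
  constructor
  · intro h; by_contra hle; push_neg at hle; exact absurd (rkpos_anti hle) (by omega)
  · exact rkpos_mono

lemma rkpos_le_iff {x y : α} : rkpos f x ≤ rkpos f y ↔ f x ≤ f y := by
  constructor
  · intro h; by_contra hle; push_neg at hle; exact absurd (rkpos_mono hle) (by omega)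
  · exact rkpos_anti

lemma rkpos_inj (hf : Function.Injective f) : Function.Injective (rkpos f) := by
  intro x y h
  exact hf (le_antisymm (rkpos_le_iff.mp h.le) (rkpos_le_iff.mp h.ge))

lemma rkpos_lt_card (x : α) : rkpos f x < Fintype.card α := by
  rw [← Finset.card_univ]
  apply Finset.card_lt_card
  apply (Finset.ssubset_iff_of_subset (filter_subset _ _)).mpr
  exact ⟨x, mem_univ x, by simp⟩

lemma rkpos_image (hf : Function.Injective f) :
    univ.image (rkpos f) = Finset.range (Fintype.card α) := by
  apply Finset.eq_of_subset_of_card_le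
  · intro m hm
    simp only [mem_image] at hm
    obtain ⟨x, _, rfl⟩ := hm
    simpa using rkpos_lt_card x
  · rw [Finset.card_range, Finset.card_image_of_injective _ (rkpos_inj hf), Finset.card_univ]

lemma exists_rkpos (hf : Function.Injective f) {m : ℕ} (hm : m < Fintype.card α) :
    ∃ x, rkpos f x = m := by
  have : m ∈ univ.image (rkpos f) := by rw [rkpos_image hf]; simpa using hm
  simpa using this

lemma card_filter_rkpos (hf : Function.Injective f) (P : ℕ → Prop) [DecidablePred P] :
    (univ.filter fun x => P (rkpos f x)).card =
      ((Finset.range (Fintype.card α)).filter P).card := by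
  rw [← rkpos_image hf, Finset.filter_image,
    Finset.card_image_of_injective _ (rkpos_inj hf)]

lemma card_rkpos_Ico (hf : Function.Injective f) {a b : ℕ} (hb : b ≤ Fintype.card α) :
    (univ.filter fun x => a ≤ rkpos f x ∧ rkpos f x < b).card = b - a := by
  rw [card_filter_rkpos hf (fun m => a ≤ m ∧ m < b)]
  have h : (Finset.range (Fintype.card α)).filter (fun m => a ≤ m ∧ m < b) =
      Finset.Ico a b := by
    ext m
    simp only [Finset.mem_filter, Finset.mem_range, Finset.mem_Ico]
    omega
  rw [h, Nat.card_Ico]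

lemma topN_rkpos (hf : Function.Injective f) (a b n : ℕ) :
    topN f n (univ.filter fun x => a ≤ rkpos f x ∧ rkpos f x < b) =
      univ.filter fun x => a ≤ rkpos f x ∧ rkpos f x < b ∧ rkpos f x < a + n := by
  have key : ∀ x : α, rkpos f x < b →
      (((univ.filter fun y => a ≤ rkpos f y ∧ rkpos f y < b)).filter
        fun y => f y < f x).card = rkpos f x - a := by
    intro x hxb
    rw [filter_filter]
    rw [filter_congr (fun y _ => (by rw [← rkpos_lt_iff (f := f)]; tauto :
      ((a ≤ rkpos f y ∧ rkpos f y < b) ∧ f y < f x) ↔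
        (a ≤ rkpos f y ∧ rkpos f y < b ∧ rkpos f y < rkpos f x)))]
    rw [card_filter_rkpos hf (fun m => a ≤ m ∧ m < b ∧ m < rkpos f x)]
    have hico : (Finset.range (Fintype.card α)).filter
        (fun m => a ≤ m ∧ m < b ∧ m < rkpos f x) = Finset.Ico a (rkpos f x) := by
      ext m
      have := rkpos_lt_card (f := f) x
      simp only [Finset.mem_filter, Finset.mem_range, Finset.mem_Ico]
      omega
    rw [hico, Nat.card_Ico]
  unfold topN
  ext x
  simp only [mem_filter, mem_univ, true_and]
  constructor
  · rintro ⟨⟨h1, h2⟩, h3⟩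
    rw [key x h2] at h3
    exact ⟨h1, h2, by omega⟩
  · rintro ⟨h1, h2, h3⟩
    exact ⟨⟨h1, h2⟩, by rw [key x h2]; omega⟩

end RkPos

lemma iterate_infl_fixed {β : Type*} [Fintype β] [DecidableEq β]
    (g : Finset β → Finset β) (hg : ∀ s, s ⊆ g s) :
    g (g^[Fintype.card β] ∅) = g^[Fintype.card β] ∅ := by
  by_cases hfix : ∃ i < Fintype.card β, g (g^[i] (∅ : Finset β)) = g^[i] ∅
  · obtain ⟨i, hi, he⟩ := hfix
    have hall : ∀ m, g^[i + m] (∅ : Finset β) = g^[i] ∅ := by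
      intro m
      induction m with
      | zero => rfl
      | succ m ih =>
        have h : i + (m + 1) = (i + m) + 1 := by omega
        rw [h, Function.iterate_succ_apply', ih, he]
    have hc : g^[Fintype.card β] (∅ : Finset β) = g^[i] ∅ := by
      have h := hall (Fintype.card β - i)
      rwa [show i + (Fintype.card β - i) = Fintype.card β by omega] at h
    rw [hc, he]
  · push_neg at hfix
    have grow : ∀ i, i ≤ Fintype.card β → i ≤ (g^[i] (∅ : Finset β)).card := by
      intro i
      induction i with
      | zero => intro _; exact Nat.zero_le _
      | succ i ih =>
        intro hi
        have h1 : g^[i] (∅ : Finset β) ⊂ g^[i+1] ∅ := by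
          rw [Function.iterate_succ_apply']
          exact ssubset_of_subset_of_ne (hg _) (Ne.symm (hfix i (by omega)))
        have h2 := Finset.card_lt_card h1
        have h3 := ih (by omega)
        omega
    have hcard : (g^[Fintype.card β] (∅ : Finset β)).card = Fintype.card β := by
      have h1 := grow (Fintype.card β) le_rfl
      have h2 : (g^[Fintype.card β] (∅ : Finset β)).card ≤ Fintype.card β :=
        Finset.card_le_univ _
      omega
    have huniv : g^[Fintype.card β] (∅ : Finset β) = univ :=
      Finset.eq_univ_of_card _ hcard
    rw [huniv]
    exact subset_antisymm (Finset.subset_univ _) (hg univ)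

lemma nat_div_eq_iff' {l q b : ℕ} (hl : 0 < l) : q / l = b ↔ l * b ≤ q ∧ q < l * b + l := by
  constructor
  · rintro rfl
    have h1 := Nat.div_add_mod q l
    have h2 := Nat.mod_lt q hl
    omega
  · rintro ⟨h1, h2⟩
    have e1 : (b+1) * l = l * b + l := by ring
    have hub : q / l < b + 1 := (Nat.div_lt_iff_lt_mul hl).mpr (by omega)
    have hlb : b ≤ q / l := (Nat.le_div_iff_mul_le hl).mpr (by rw [mul_comm]; omega)
    omega

lemma nat_div_le_of_lt' {l q b : ℕ} (hl : 0 < l) (h : q < l * b + l) : q / l ≤ b := by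
  have e1 : (b+1) * l = l * b + l := by ring
  have h2 := (Nat.div_lt_iff_lt_mul hl).mpr (show q < (b+1)*l by omega)
  omega

lemma nat_le_div_of_le' {l q b : ℕ} (hl : 0 < l) (h : l * b ≤ q) : b ≤ q / l :=
  (Nat.le_div_iff_mul_le hl).mpr (by rw [mul_comm]; omega)

section Step1
variable {D H : Type*} [Fintype D] [Fintype H] [DecidableEq D] [DecidableEq H]

/-- The limit rejection set of the interview stage under common preferences. -/
def Rstar (fD : D → ℕ) (fH : H → ℕ) (l k : ℕ) : Finset (H × D) :=
  univ.filter fun p => rkpos fD p.2 < l * (rkpos fH p.1 / k)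

/-- The block-structured interview matching. -/
def Vstar (fD : D → ℕ) (fH : H → ℕ) (l k : ℕ) : Finset (H × D) :=
  univ.filter fun p => rkpos fH p.1 / k = rkpos fD p.2 / l

variable {M : Market D H} {fD : D → ℕ} {fH : H → ℕ} {l k : ℕ}

lemma mem_Rstar {p : H × D} :
    p ∈ Rstar fD fH l k ↔ rkpos fD p.2 < l * (rkpos fH p.1 / k) := by
  simp [Rstar]

lemma hProps_Rstar (hDr : ∀ h, M.rankHD h = fD) (haccH : ∀ h d, M.accH h d)
    (hfD : Function.Injective fD) (hl : 1 ≤ l) (h : H) :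
    hProps M (fun _ => l) (Rstar fD fH l k) h =
      univ.filter fun d => l * (rkpos fH h / k) ≤ rkpos fD d ∧
        rkpos fD d < l * (rkpos fH h / k) + l := by
  unfold hProps
  rw [hDr h]
  have hset : (univ.filter fun d => M.accH h d ∧ (h, d) ∉ Rstar fD fH l k) =
      univ.filter fun d => l * (rkpos fH h / k) ≤ rkpos fD d ∧
        rkpos fD d < Fintype.card D := by
    ext d
    have hc := rkpos_lt_card (f := fD) d
    simp only [mem_filter, mem_univ, true_and, mem_Rstar, haccH]
    omega
  rw [hset, topN_rkpos hfD]
  ext d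
  have hc := rkpos_lt_card (f := fD) d
  simp only [mem_filter, mem_univ, true_and]
  omega

lemma hProps_bound {R : Finset (H × D)} (hDr : ∀ h, M.rankHD h = fD)
    (haccH : ∀ h d, M.accH h d) (hfD : Function.Injective fD)
    (hR : R ⊆ Rstar fD fH l k) {h : H} {d : D}
    (hd : d ∈ hProps M (fun _ => l) R h) :
    rkpos fD d < l * (rkpos fH h / k) + l := by
  by_contra hge
  push_neg at hge
  unfold hProps at hd
  rw [hDr h] at hd
  unfold topN at hd
  simp only [mem_filter, mem_univ, true_and] at hd
  obtain ⟨⟨hacc, hnR⟩, hcnt⟩ := hd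
  have hsub : (univ.filter fun y =>
      l * (rkpos fH h / k) ≤ rkpos fD y ∧ rkpos fD y < rkpos fD d) ⊆
      ((univ.filter fun d' => M.accH h d' ∧ (h, d') ∉ R).filter fun y => fD y < fD d) := by
    intro y hy
    simp only [mem_filter, mem_univ, true_and] at hy ⊢
    obtain ⟨hy1, hy2⟩ := hy
    refine ⟨⟨haccH h y, fun hmem => ?_⟩, rkpos_lt_iff.mp hy2⟩
    have hm := mem_Rstar.mp (hR hmem)
    simp only at hm
    omega
  have hcard := card_rkpos_Ico (f := fD) hfD
    (a := l * (rkpos fH h / k)) (b := rkpos fD d) (rkpos_lt_card d).le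
  have hle := Finset.card_le_card hsub
  omega

lemma dKeeps_Rstar (hDr : ∀ h, M.rankHD h = fD) (hHr : ∀ d, M.rankDH d = fH)
    (haccD : ∀ d h, M.accD d h) (haccH : ∀ h d, M.accH h d)
    (hfD : Function.Injective fD) (hfH : Function.Injective fH)
    (hl : 1 ≤ l) (hk : 1 ≤ k) (d : D) :
    dKeeps M (fun _ => l) (fun _ => k) (Rstar fD fH l k) d =
      univ.filter fun h => k * (rkpos fD d / l) ≤ rkpos fH h ∧
        rkpos fH h < k * (rkpos fD d / l) + k := by
  unfold dKeeps
  simp only [hHr]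
  have hset : (univ.filter fun h => M.accD d h ∧ d ∈ hProps M (fun _ => l) (Rstar fD fH l k) h) =
      univ.filter fun h => k * (rkpos fD d / l) ≤ rkpos fH h ∧
        rkpos fH h < k * (rkpos fD d / l) + k := by
    ext h
    simp only [mem_filter, mem_univ, true_and, haccD, true_and,
      hProps_Rstar hDr haccH hfD hl h]
    constructor
    · rintro ⟨h1, h2⟩
      have hbeq : rkpos fD d / l = rkpos fH h / k := (nat_div_eq_iff' hl).mpr ⟨h1, h2⟩
      rw [hbeq]
      exact (nat_div_eq_iff' hk).mp rfl
    · rintro ⟨h1, h2⟩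
      have hbeq : rkpos fH h / k = rkpos fD d / l := (nat_div_eq_iff' hk).mpr ⟨h1, h2⟩
      rw [hbeq]
      exact (nat_div_eq_iff' hl).mp rfl
  rw [hset, topN_rkpos hfH]
  ext h
  simp only [mem_filter, mem_univ, true_and]
  omega

lemma iStep_Rstar_fixed (hDr : ∀ h, M.rankHD h = fD) (hHr : ∀ d, M.rankDH d = fH)
    (haccD : ∀ d h, M.accD d h) (haccH : ∀ h d, M.accH h d)
    (hfD : Function.Injective fD) (hfH : Function.Injective fH)
    (hl : 1 ≤ l) (hk : 1 ≤ k) :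
    iStep M (fun _ => l) (fun _ => k) (Rstar fD fH l k) = Rstar fD fH l k := by
  unfold iStep
  have hemp : (univ.filter fun p : H × D =>
      p.2 ∈ hProps M (fun _ => l) (Rstar fD fH l k) p.1 ∧
      p.1 ∉ dKeeps M (fun _ => l) (fun _ => k) (Rstar fD fH l k) p.2) = ∅ := by
    rw [Finset.filter_eq_empty_iff]
    rintro ⟨h, d⟩ _ ⟨h1, h2⟩
    apply h2
    rw [hProps_Rstar hDr haccH hfD hl h] at h1
    simp only [mem_filter, mem_univ, true_and] at h1
    rw [dKeeps_Rstar hDr hHr haccD haccH hfD hfH hl hk d]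
    simp only [mem_filter, mem_univ, true_and]
    have hbeq : rkpos fD d / l = rkpos fH h / k := (nat_div_eq_iff' hl).mpr h1
    rw [hbeq]
    exact (nat_div_eq_iff' hk).mp rfl
  rw [hemp, Finset.union_empty]

lemma iStep_sub_Rstar (hDr : ∀ h, M.rankHD h = fD) (hHr : ∀ d, M.rankDH d = fH)
    (haccD : ∀ d h, M.accD d h) (haccH : ∀ h d, M.accH h d)
    (hfD : Function.Injective fD) (hfH : Function.Injective fH)
    (hl : 1 ≤ l) (hk : 1 ≤ k)
    {R : Finset (H × D)} (hR : R ⊆ Rstar fD fH l k) :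
    iStep M (fun _ => l) (fun _ => k) R ⊆ Rstar fD fH l k := by
  intro p hp
  rw [iStep, Finset.mem_union] at hp
  rcases hp with hp | hp
  · exact hR hp
  obtain ⟨h, d⟩ := p
  simp only [mem_filter, mem_univ, true_and] at hp
  obtain ⟨hp1, hp2⟩ := hp
  rw [mem_Rstar]
  simp only
  -- h ∈ filter set of dKeeps
  unfold dKeeps at hp2
  simp only [hHr] at hp2
  unfold topN at hp2
  simp only [mem_filter, mem_univ, true_and, not_and, not_lt] at hp2
  have hcnt : k ≤ ((univ.filter fun h' => M.accD d h' ∧ d ∈ hProps M (fun _ => l) R h').filter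
      fun y => fH y < fH h).card := hp2 ⟨haccD d h, hp1⟩
  -- bound the count from above
  have hsub : ((univ.filter fun h' => M.accD d h' ∧ d ∈ hProps M (fun _ => l) R h').filter
      fun y => fH y < fH h) ⊆
      univ.filter fun h' => k * (rkpos fD d / l) ≤ rkpos fH h' ∧ rkpos fH h' < rkpos fH h := by
    intro y hy
    simp only [mem_filter, mem_univ, true_and] at hy ⊢
    obtain ⟨⟨_, hy1⟩, hy2⟩ := hy
    refine ⟨?_, rkpos_lt_iff.mpr hy2⟩
    have hb := hProps_bound hDr haccH hfD hR hy1
    have hble : rkpos fD d / l ≤ rkpos fH y / k := nat_div_le_of_lt' hl hb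
    have h1 : k * (rkpos fD d / l) ≤ k * (rkpos fH y / k) := Nat.mul_le_mul_left k hble
    have h2 := Nat.div_add_mod (rkpos fH y) k
    omega
  have hcard := card_rkpos_Ico (f := fH) hfH
    (a := k * (rkpos fD d / l)) (b := rkpos fH h) (rkpos_lt_card h).le
  have hle := Finset.card_le_card hsub
  -- k * (rkpos fD d / l) + k ≤ rkpos fH h
  have hkb : k * (rkpos fD d / l + 1) ≤ rkpos fH h := by
    have e : k * (rkpos fD d / l + 1) = k * (rkpos fD d / l) + k := by ring
    omega
  have hdiv : rkpos fD d / l + 1 ≤ rkpos fH h / k := nat_le_div_of_le' hk hkb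
  have h3 : l * (rkpos fD d / l + 1) ≤ l * (rkpos fH h / k) := Nat.mul_le_mul_left l hdiv
  have h4 := Nat.div_add_mod (rkpos fD d) l
  have h5 := Nat.mod_lt (rkpos fD d) hl
  have e2 : l * (rkpos fD d / l + 1) = l * (rkpos fD d / l) + l := by ring
  omega

end Step1

section Step1b
variable {D H : Type*} [Fintype D] [Fintype H] [DecidableEq D] [DecidableEq H]
variable {M : Market D H} {fD : D → ℕ} {fH : H → ℕ} {l k : ℕ}

lemma fixed_eq_Rstar (hDr : ∀ h, M.rankHD h = fD) (hHr : ∀ d, M.rankDH d = fH)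
    (haccD : ∀ d h, M.accD d h) (haccH : ∀ h d, M.accH h d)
    (hfD : Function.Injective fD) (hfH : Function.Injective fH)
    (hl : 1 ≤ l) (hk : 1 ≤ k)
    {R : Finset (H × D)} (hR : R ⊆ Rstar fD fH l k)
    (hfix : iStep M (fun _ => l) (fun _ => k) R = R) : R = Rstar fD fH l k := by
  by_contra hne
  have hSne : (Rstar fD fH l k \ R).Nonempty := by
    rw [Finset.sdiff_nonempty]
    intro hsub; exact hne (subset_antisymm hR hsub)
  obtain ⟨p, hpmem, hpmin⟩ := Finset.exists_min_image _
    (fun p : H × D => rkpos fD p.2 * Fintype.card H + rkpos fH p.1) hSne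
  obtain ⟨h, d⟩ := p
  rw [Finset.mem_sdiff] at hpmem
  obtain ⟨hpRs, hpR⟩ := hpmem
  have hblk : rkpos fD d < l * (rkpos fH h / k) := by
    have := mem_Rstar.mp hpRs; simpa using this
  have min1 : ∀ (h' : H) (d' : D), (h', d') ∈ Rstar fD fH l k →
      rkpos fD d' < rkpos fD d → (h', d') ∈ R := by
    intro h' d' hRs hlt
    by_contra hnR
    have hm := hpmin (h', d') (Finset.mem_sdiff.mpr ⟨hRs, hnR⟩)
    simp only at hm
    have hbH := rkpos_lt_card (f := fH) h'
    have e1 : (rkpos fD d' + 1) * Fintype.card H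
        = rkpos fD d' * Fintype.card H + Fintype.card H := by ring
    have e2 : (rkpos fD d' + 1) * Fintype.card H ≤ rkpos fD d * Fintype.card H :=
      Nat.mul_le_mul_right _ hlt
    omega
  have min2 : ∀ (h' : H), (h', d) ∈ Rstar fD fH l k →
      rkpos fH h' < rkpos fH h → (h', d) ∈ R := by
    intro h' hRs hlt
    by_contra hnR
    have hm := hpmin (h', d) (Finset.mem_sdiff.mpr ⟨hRs, hnR⟩)
    simp only at hm
    omega
  clear hpmin
  have hstep1 : d ∈ hProps M (fun _ => l) R h := by
    unfold hProps
    rw [hDr h]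
    unfold topN
    simp only [mem_filter, mem_univ, true_and]
    refine ⟨⟨haccH h d, hpR⟩, ?_⟩
    have hemp : ((univ.filter fun d' => M.accH h d' ∧ (h, d') ∉ R).filter
        fun y => fD y < fD d) = ∅ := by
      rw [Finset.filter_eq_empty_iff]
      intro y hy
      simp only [mem_filter, mem_univ, true_and] at hy
      intro hlt
      have hpy : rkpos fD y < rkpos fD d := rkpos_lt_iff.mpr hlt
      exact hy.2 (min1 h y (mem_Rstar.mpr (by simp only; omega)) hpy)
    rw [hemp]
    simp only [card_empty]; omega
  have hstep2 : h ∈ dKeeps M (fun _ => l) (fun _ => k) R d := by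
    by_contra hnK
    have hmem : (h, d) ∈ iStep M (fun _ => l) (fun _ => k) R := by
      rw [iStep, Finset.mem_union]
      right
      simp only [mem_filter, mem_univ, true_and]
      exact ⟨hstep1, hnK⟩
    rw [hfix] at hmem
    exact hpR hmem
  unfold dKeeps at hstep2
  simp only [hHr] at hstep2
  unfold topN at hstep2
  simp only [mem_filter, mem_univ, true_and] at hstep2
  have hcnt := hstep2.2
  have hbDlt : rkpos fD d / l + 1 ≤ rkpos fH h / k := by
    have e : (rkpos fH h / k) * l = l * (rkpos fH h / k) := mul_comm _ _
    have h1 := (Nat.div_lt_iff_lt_mul hl).mpr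
      (show rkpos fD d < (rkpos fH h / k) * l by omega)
    omega
  have hkb : k * (rkpos fD d / l) + k ≤ rkpos fH h := by
    have h1 : k * (rkpos fD d / l + 1) ≤ k * (rkpos fH h / k) :=
      Nat.mul_le_mul_left k hbDlt
    have h2 := Nat.div_add_mod (rkpos fH h) k
    have e : k * (rkpos fD d / l + 1) = k * (rkpos fD d / l) + k := by ring
    omega
  have hsubT : (univ.filter fun h' => k * (rkpos fD d / l) ≤ rkpos fH h' ∧
      rkpos fH h' < k * (rkpos fD d / l) + k) ⊆
      ((univ.filter fun h' => M.accD d h' ∧ d ∈ hProps M (fun _ => l) R h').filter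
        fun y => fH y < fH h) := by
    intro h' hh'
    simp only [mem_filter, mem_univ, true_and] at hh' ⊢
    obtain ⟨hh1, hh2⟩ := hh'
    have hbeq : rkpos fH h' / k = rkpos fD d / l := (nat_div_eq_iff' hk).mpr ⟨hh1, hh2⟩
    have hphlt : fH h' < fH h := rkpos_lt_iff.mp (by omega)
    refine ⟨⟨haccD d h', ?_⟩, hphlt⟩
    unfold hProps
    rw [hDr h']
    unfold topN
    simp only [mem_filter, mem_univ, true_and]
    have h4 := Nat.div_add_mod (rkpos fD d) l
    have h5 := Nat.mod_lt (rkpos fD d) hl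
    have hnotR : (h', d) ∉ R := by
      intro hmem
      have hx := mem_Rstar.mp (hR hmem)
      simp only at hx
      rw [hbeq] at hx
      omega
    refine ⟨⟨haccH h' d, hnotR⟩, ?_⟩
    have hsub2 : ((univ.filter fun d' => M.accH h' d' ∧ (h', d') ∉ R).filter
        fun y => fD y < fD d) ⊆
        univ.filter fun y => l * (rkpos fD d / l) ≤ rkpos fD y ∧
          rkpos fD y < rkpos fD d := by
      intro y hy
      simp only [mem_filter, mem_univ, true_and] at hy ⊢
      obtain ⟨⟨_, hyR⟩, hylt⟩ := hy
      have hpy : rkpos fD y < rkpos fD d := rkpos_lt_iff.mpr hylt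
      refine ⟨?_, hpy⟩
      by_contra hno
      push_neg at hno
      exact hyR (min1 h' y (mem_Rstar.mpr (by simp only; rw [hbeq]; omega)) hpy)
    have hc2 := card_rkpos_Ico (f := fD) hfD
      (a := l * (rkpos fD d / l)) (b := rkpos fD d) (rkpos_lt_card d).le
    have hle2 := Finset.card_le_card hsub2
    omega
  have hcT := card_rkpos_Ico (f := fH) hfH
    (a := k * (rkpos fD d / l)) (b := k * (rkpos fD d / l) + k)
    (by have := rkpos_lt_card (f := fH) h; omega)
  have hleT := Finset.card_le_card hsubT
  omega

lemma iRej_eq_Rstar (hDr : ∀ h, M.rankHD h = fD) (hHr : ∀ d, M.rankDH d = fH)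
    (haccD : ∀ d h, M.accD d h) (haccH : ∀ h d, M.accH h d)
    (hfD : Function.Injective fD) (hfH : Function.Injective fH)
    (hl : 1 ≤ l) (hk : 1 ≤ k) :
    iRej M (fun _ => l) (fun _ => k) = Rstar fD fH l k := by
  have hinfl : ∀ R : Finset (H × D), R ⊆ iStep M (fun _ => l) (fun _ => k) R :=
    fun R => Finset.subset_union_left
  have hcard : Fintype.card D * Fintype.card H = Fintype.card (H × D) := by
    rw [Fintype.card_prod]; ring
  have hsub : ∀ n, (iStep M (fun _ => l) (fun _ => k))^[n] ∅ ⊆ Rstar fD fH l k := by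
    intro n
    induction n with
    | zero => simp
    | succ n ih =>
      rw [Function.iterate_succ_apply']
      exact iStep_sub_Rstar hDr hHr haccD haccH hfD hfH hl hk ih
  have hfix : iStep M (fun _ => l) (fun _ => k) (iRej M (fun _ => l) (fun _ => k)) =
      iRej M (fun _ => l) (fun _ => k) := by
    unfold iRej
    rw [hcard]
    exact iterate_infl_fixed _ hinfl
  exact fixed_eq_Rstar hDr hHr haccD haccH hfD hfH hl hk (hsub _) hfix

lemma interviews_eq_Vstar (hDr : ∀ h, M.rankHD h = fD) (hHr : ∀ d, M.rankDH d = fH)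
    (haccD : ∀ d h, M.accD d h) (haccH : ∀ h d, M.accH h d)
    (hfD : Function.Injective fD) (hfH : Function.Injective fH)
    (hl : 1 ≤ l) (hk : 1 ≤ k) :
    interviews M (fun _ => l) (fun _ => k) = Vstar fD fH l k := by
  unfold interviews
  rw [iRej_eq_Rstar hDr hHr haccD haccH hfD hfH hl hk]
  ext ⟨h, d⟩
  simp only [mem_filter, mem_univ, true_and, Vstar,
    hProps_Rstar hDr haccH hfD hl h,
    dKeeps_Rstar hDr hHr haccD haccH hfD hfH hl hk d]
  constructor
  · rintro ⟨⟨h1, h2⟩, _⟩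
    exact ((nat_div_eq_iff' hl).mpr ⟨h1, h2⟩).symm
  · intro hbeq
    have h1 : rkpos fD d / l = rkpos fH h / k := hbeq.symm
    constructor
    · rw [hbeq]; exact (nat_div_eq_iff' hl).mp rfl
    · rw [← hbeq]; exact (nat_div_eq_iff' hk).mp rfl

end Step1b

lemma nat_same_div_mod_lt {l a b : ℕ} (h : a / l = b / l) (hab : a < b) :
    a % l < b % l := by
  have m1 := Nat.div_add_mod a l
  have m2 := Nat.div_add_mod b l
  rw [h] at m1
  omega

lemma nat_div_of_build {l b o : ℕ} (hl : 0 < l) (ho : o < l) : (l * b + o) / l = b :=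
  (nat_div_eq_iff' hl).mpr ⟨by omega, by omega⟩

lemma nat_mod_of_build {l b o : ℕ} (hl : 0 < l) (ho : o < l) : (l * b + o) % l = o := by
  have h1 := nat_div_of_build hl ho (b := b)
  have h2 := Nat.div_add_mod (l * b + o) l
  rw [h1] at h2
  omega

section Step2
variable {D H : Type*} [Fintype D] [Fintype H] [DecidableEq D] [DecidableEq H]

/-- The limit rejection set of the matching stage under common preferences. -/
def Sstar (fD : D → ℕ) (fH : H → ℕ) (l k : ℕ) : Finset (D × H) :=
  univ.filter fun p => rkpos fH p.2 / k = rkpos fD p.1 / l ∧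
    rkpos fH p.2 % k < rkpos fD p.1 % l

/-- The final (assortative within blocks) matching. -/
def Mustar (fD : D → ℕ) (fH : H → ℕ) (l k : ℕ) : Finset (D × H) :=
  univ.filter fun p => rkpos fH p.2 = k * (rkpos fD p.1 / l) + rkpos fD p.1 % l ∧
    rkpos fD p.1 % l < k

variable {M : Market D H} {fD : D → ℕ} {fH : H → ℕ} {l k : ℕ}

lemma mem_Sstar {p : D × H} :
    p ∈ Sstar fD fH l k ↔ rkpos fH p.2 / k = rkpos fD p.1 / l ∧
      rkpos fH p.2 % k < rkpos fD p.1 % l := by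
  simp [Sstar]

lemma mem_Vstar {p : H × D} :
    p ∈ Vstar fD fH l k ↔ rkpos fH p.1 / k = rkpos fD p.2 / l := by
  simp [Vstar]

lemma mem_Sstar_pair {d : D} {h : H} :
    (d, h) ∈ Sstar fD fH l k ↔ rkpos fH h / k = rkpos fD d / l ∧
      rkpos fH h % k < rkpos fD d % l := by
  simp [Sstar]

lemma mem_Vstar_pair {h : H} {d : D} :
    (h, d) ∈ Vstar fD fH l k ↔ rkpos fH h / k = rkpos fD d / l := by
  simp [Vstar]

lemma dProps_Sstar (hHr : ∀ d, M.rankDH d = fH) (hfH : Function.Injective fH)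
    (hl : 1 ≤ l) (hk : 1 ≤ k) (d : D) :
    dProps M (Vstar fD fH l k) (Sstar fD fH l k) d =
      univ.filter fun h => rkpos fH h = k * (rkpos fD d / l) + rkpos fD d % l ∧
        rkpos fD d % l < k := by
  unfold dProps
  rw [hHr d]
  have hset : (univ.filter fun h => (h, d) ∈ Vstar fD fH l k ∧ (d, h) ∉ Sstar fD fH l k) =
      univ.filter fun h => k * (rkpos fD d / l) + rkpos fD d % l ≤ rkpos fH h ∧
        rkpos fH h < k * (rkpos fD d / l) + k := by
    ext h
    simp only [mem_filter, mem_univ, true_and, mem_Vstar, mem_Sstar]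
    constructor
    · rintro ⟨hb, hn⟩
      have hno : ¬ (rkpos fH h % k < rkpos fD d % l) := fun hx => hn ⟨hb, hx⟩
      have h1 := Nat.div_add_mod (rkpos fH h) k
      have h2 := Nat.mod_lt (rkpos fH h) hk
      rw [hb] at h1
      omega
    · rintro ⟨h1, h2⟩
      have hb : rkpos fH h / k = rkpos fD d / l :=
        (nat_div_eq_iff' hk).mpr ⟨by omega, h2⟩
      have h3 := Nat.div_add_mod (rkpos fH h) k
      rw [hb] at h3
      exact ⟨hb, fun hx => by omega⟩
  rw [hset, topN_rkpos hfH]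
  ext h
  simp only [mem_filter, mem_univ, true_and]
  have h2 := Nat.mod_lt (rkpos fD d) hl
  omega

lemma hKeeps_Sstar (hDr : ∀ h, M.rankHD h = fD) (hHr : ∀ d, M.rankDH d = fH)
    (hfD : Function.Injective fD) (hfH : Function.Injective fH)
    (hl : 1 ≤ l) (hk : 1 ≤ k) (h : H) :
    hKeeps M (Vstar fD fH l k) (Sstar fD fH l k) h =
      univ.filter fun d => rkpos fH h = k * (rkpos fD d / l) + rkpos fD d % l ∧
        rkpos fD d % l < k := by
  unfold hKeeps
  rw [hDr h]
  have hset : (univ.filter fun d => h ∈ dProps M (Vstar fD fH l k) (Sstar fD fH l k) d) =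
      univ.filter fun d => rkpos fH h = k * (rkpos fD d / l) + rkpos fD d % l ∧
        rkpos fD d % l < k := by
    ext d
    simp only [mem_filter, mem_univ, true_and, dProps_Sstar hHr hfH hl hk d]
  rw [hset]
  have huniq : ∀ y d : D,
      (rkpos fH h = k * (rkpos fD y / l) + rkpos fD y % l ∧ rkpos fD y % l < k) →
      (rkpos fH h = k * (rkpos fD d / l) + rkpos fD d % l ∧ rkpos fD d % l < k) →
      y = d := by
    intro y d ⟨hy1, hy2⟩ ⟨hd1, hd2⟩
    have hby : rkpos fH h / k = rkpos fD y / l := by rw [hy1]; exact nat_div_of_build hk hy2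
    have hbd : rkpos fH h / k = rkpos fD d / l := by rw [hd1]; exact nat_div_of_build hk hd2
    have hmy : rkpos fH h % k = rkpos fD y % l := by rw [hy1]; exact nat_mod_of_build hk hy2
    have hmd : rkpos fH h % k = rkpos fD d % l := by rw [hd1]; exact nat_mod_of_build hk hd2
    have my := Nat.div_add_mod (rkpos fD y) l
    have md := Nat.div_add_mod (rkpos fD d) l
    rw [← hby] at my
    rw [← hbd] at md
    have : rkpos fD y = rkpos fD d := by omega
    exact rkpos_inj hfD this
  unfold topN
  apply Finset.filter_eq_self.mpr
  intro d hd
  simp only [mem_filter, mem_univ, true_and] at hd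
  have hemp : ((univ.filter fun d' =>
      rkpos fH h = k * (rkpos fD d' / l) + rkpos fD d' % l ∧ rkpos fD d' % l < k).filter
      fun y => fD y < fD d) = ∅ := by
    rw [Finset.filter_eq_empty_iff]
    intro y hy
    simp only [mem_filter, mem_univ, true_and] at hy
    have : y = d := huniq y d hy hd
    subst this
    omega
  rw [hemp]
  simp

lemma mStep_Sstar_fixed (hDr : ∀ h, M.rankHD h = fD) (hHr : ∀ d, M.rankDH d = fH)
    (hfD : Function.Injective fD) (hfH : Function.Injective fH)
    (hl : 1 ≤ l) (hk : 1 ≤ k) :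
    mStep M (Vstar fD fH l k) (Sstar fD fH l k) = Sstar fD fH l k := by
  unfold mStep
  have hemp : (univ.filter fun p : D × H =>
      p.2 ∈ dProps M (Vstar fD fH l k) (Sstar fD fH l k) p.1 ∧
      p.1 ∉ hKeeps M (Vstar fD fH l k) (Sstar fD fH l k) p.2) = ∅ := by
    rw [Finset.filter_eq_empty_iff]
    rintro ⟨d, h⟩ _ ⟨h1, h2⟩
    apply h2
    rw [dProps_Sstar hHr hfH hl hk d] at h1
    rw [hKeeps_Sstar hDr hHr hfD hfH hl hk h]
    simpa using h1
  rw [hemp, Finset.union_empty]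

end Step2

section Step2b
variable {D H : Type*} [Fintype D] [Fintype H] [DecidableEq D] [DecidableEq H]
variable {M : Market D H} {fD : D → ℕ} {fH : H → ℕ} {l k : ℕ}

lemma mStep_sub_Sstar (hDr : ∀ h, M.rankHD h = fD) (hHr : ∀ d, M.rankDH d = fH)
    (hfD : Function.Injective fD) (hfH : Function.Injective fH)
    (hl : 1 ≤ l) (hk : 1 ≤ k)
    {S : Finset (D × H)} (hS : S ⊆ Sstar fD fH l k) :
    mStep M (Vstar fD fH l k) S ⊆ Sstar fD fH l k := by
  intro p hp
  rw [mStep, Finset.mem_union] at hp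
  rcases hp with hp | hp
  · exact hS hp
  obtain ⟨d, h⟩ := p
  simp only [mem_filter, mem_univ, true_and] at hp
  obtain ⟨hp1, hp2⟩ := hp
  -- unfold dProps membership for d
  have hp1' := hp1
  unfold dProps at hp1'
  rw [hHr d] at hp1'
  unfold topN at hp1'
  simp only [mem_filter, mem_univ, true_and] at hp1'
  obtain ⟨⟨hV, hnS⟩, hcnt1⟩ := hp1'
  rw [mem_Vstar_pair] at hV
  rw [mem_Sstar_pair]
  refine ⟨hV, ?_⟩
  by_contra hno
  push_neg at hno   -- pd d % l ≤ ph h % k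
  -- from hp2 : d not kept by h, there is a better proposer d'
  unfold hKeeps at hp2
  rw [hDr h] at hp2
  unfold topN at hp2
  simp only [mem_filter, mem_univ, true_and, not_and, not_lt] at hp2
  have hge := hp2 hp1
  have hne : ((univ.filter fun d' => h ∈ dProps M (Vstar fD fH l k) S d').filter
      fun y => fD y < fD d).Nonempty := by
    rw [← Finset.card_pos]; omega
  obtain ⟨d', hd'⟩ := hne
  simp only [mem_filter, mem_univ, true_and] at hd'
  obtain ⟨hd'P, hd'lt⟩ := hd'
  -- unfold dProps membership for d'
  unfold dProps at hd'P
  rw [hHr d'] at hd'P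
  unfold topN at hd'P
  simp only [mem_filter, mem_univ, true_and] at hd'P
  obtain ⟨⟨hV', hnS'⟩, hcnt'⟩ := hd'P
  rw [mem_Vstar_pair] at hV'
  have hpdlt : rkpos fD d' < rkpos fD d := rkpos_lt_iff.mpr hd'lt
  have hbeq : rkpos fD d' / l = rkpos fD d / l := by rw [← hV', ← hV]
  have homlt : rkpos fD d' % l < rkpos fD d % l := nat_same_div_mod_lt hbeq hpdlt
  -- construct a hospital h'' better than h that d' has not been rejected by
  have hmodh := Nat.div_add_mod (rkpos fH h) k
  have hmlt := Nat.mod_lt (rkpos fH h) hk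
  have hbound : k * (rkpos fH h / k) + rkpos fD d' % l < Fintype.card H := by
    have := rkpos_lt_card (f := fH) h
    omega
  obtain ⟨h'', hh''⟩ := exists_rkpos hfH hbound
  have hdiv'' : rkpos fH h'' / k = rkpos fH h / k := by
    rw [hh'']
    exact nat_div_of_build hk (by omega)
  have hmod'' : rkpos fH h'' % k = rkpos fD d' % l := by
    rw [hh'']
    exact nat_mod_of_build hk (by omega)
  have hmem'' : h'' ∈ ((univ.filter fun h' =>
      (h', d') ∈ Vstar fD fH l k ∧ (d', h') ∉ S).filter fun y => fH y < fH h) := by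
    simp only [mem_filter, mem_univ, true_and, mem_Vstar_pair]
    refine ⟨⟨?_, ?_⟩, ?_⟩
    · rw [hdiv'', hV, ← hbeq]
    · intro hmem
      have hx := mem_Sstar_pair.mp (hS hmem)
      rw [hmod''] at hx
      omega
    · apply rkpos_lt_iff.mp
      rw [hh'']
      omega
  have := Finset.card_pos.mpr ⟨h'', hmem''⟩
  omega

lemma fixed_eq_Sstar (hDr : ∀ h, M.rankHD h = fD) (hHr : ∀ d, M.rankDH d = fH)
    (hfD : Function.Injective fD) (hfH : Function.Injective fH)
    (hl : 1 ≤ l) (hk : 1 ≤ k)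
    {S : Finset (D × H)} (hS : S ⊆ Sstar fD fH l k)
    (hfix : mStep M (Vstar fD fH l k) S = S) : S = Sstar fD fH l k := by
  by_contra hne
  have hSne : (Sstar fD fH l k \ S).Nonempty := by
    rw [Finset.sdiff_nonempty]
    intro hsub; exact hne (subset_antisymm hS hsub)
  obtain ⟨p, hpmem, hpmin⟩ := Finset.exists_min_image _
    (fun p : D × H => rkpos fD p.1 * Fintype.card H + rkpos fH p.2) hSne
  obtain ⟨d, h⟩ := p
  rw [Finset.mem_sdiff] at hpmem
  obtain ⟨hpSs, hpS⟩ := hpmem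
  obtain ⟨hb, ho⟩ := mem_Sstar_pair.mp hpSs
  have min1 : ∀ (d' : D) (h' : H), (d', h') ∈ Sstar fD fH l k →
      rkpos fD d' < rkpos fD d → (d', h') ∈ S := by
    intro d' h' hSs hlt
    by_contra hnS
    have hm := hpmin (d', h') (Finset.mem_sdiff.mpr ⟨hSs, hnS⟩)
    simp only at hm
    have hbH := rkpos_lt_card (f := fH) h'
    have e1 : (rkpos fD d' + 1) * Fintype.card H
        = rkpos fD d' * Fintype.card H + Fintype.card H := by ring
    have e2 : (rkpos fD d' + 1) * Fintype.card H ≤ rkpos fD d * Fintype.card H :=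
      Nat.mul_le_mul_right _ hlt
    omega
  have min2 : ∀ (h' : H), (d, h') ∈ Sstar fD fH l k →
      rkpos fH h' < rkpos fH h → (d, h') ∈ S := by
    intro h' hSs hlt
    by_contra hnS
    have hm := hpmin (d, h') (Finset.mem_sdiff.mpr ⟨hSs, hnS⟩)
    simp only at hm
    omega
  clear hpmin
  have hstep1 : h ∈ dProps M (Vstar fD fH l k) S d := by
    unfold dProps
    rw [hHr d]
    unfold topN
    simp only [mem_filter, mem_univ, true_and]
    refine ⟨⟨mem_Vstar_pair.mpr hb, hpS⟩, ?_⟩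
    have hemp : ((univ.filter fun h' => (h', d) ∈ Vstar fD fH l k ∧ (d, h') ∉ S).filter
        fun y => fH y < fH h) = ∅ := by
      rw [Finset.filter_eq_empty_iff]
      intro y hy
      simp only [mem_filter, mem_univ, true_and, mem_Vstar_pair] at hy
      intro hlt
      have hpy : rkpos fH y < rkpos fH h := rkpos_lt_iff.mpr hlt
      have hby : rkpos fH y / k = rkpos fH h / k := by
        rw [hy.1, hb]
      have homy : rkpos fH y % k < rkpos fH h % k := nat_same_div_mod_lt hby hpy
      apply hy.2
      apply min2 y _ hpy
      rw [mem_Sstar_pair]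
      exact ⟨hy.1, by omega⟩
    rw [hemp]
    simp
  have hstep2 : d ∈ hKeeps M (Vstar fD fH l k) S h := by
    by_contra hnK
    have hmem : (d, h) ∈ mStep M (Vstar fD fH l k) S := by
      rw [mStep, Finset.mem_union]
      right
      simp only [mem_filter, mem_univ, true_and]
      exact ⟨hstep1, hnK⟩
    rw [hfix] at hmem
    exact hpS hmem
  -- construct a better proposer d'' to h, contradicting hstep2
  unfold hKeeps at hstep2
  rw [hDr h] at hstep2
  unfold topN at hstep2
  simp only [mem_filter, mem_univ, true_and] at hstep2
  have hcnt := hstep2.2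
  have hmodd := Nat.div_add_mod (rkpos fD d) l
  have hbound : l * (rkpos fD d / l) + rkpos fH h % k < Fintype.card D := by
    have := rkpos_lt_card (f := fD) d
    omega
  obtain ⟨d'', hd''⟩ := exists_rkpos hfD hbound
  have hmodlt : rkpos fH h % k < l := by
    have := Nat.mod_lt (rkpos fD d) hl
    omega
  have hdiv'' : rkpos fD d'' / l = rkpos fD d / l := by
    rw [hd'']
    exact nat_div_of_build hl hmodlt
  have hmod'' : rkpos fD d'' % l = rkpos fH h % k := by
    rw [hd'']
    exact nat_mod_of_build hl hmodlt
  have hpd''lt : rkpos fD d'' < rkpos fD d := by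
    rw [hd'']
    omega
  have hd''P : h ∈ dProps M (Vstar fD fH l k) S d'' := by
    unfold dProps
    rw [hHr d'']
    unfold topN
    simp only [mem_filter, mem_univ, true_and]
    constructor
    · refine ⟨mem_Vstar_pair.mpr (by rw [hdiv'', hb]), ?_⟩
      intro hmem
      have hx := mem_Sstar_pair.mp (hS hmem)
      rw [hmod''] at hx
      omega
    · have hemp : ((univ.filter fun h' => (h', d'') ∈ Vstar fD fH l k ∧ (d'', h') ∉ S).filter
          fun y => fH y < fH h) = ∅ := by
        rw [Finset.filter_eq_empty_iff]
        intro y hy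
        simp only [mem_filter, mem_univ, true_and, mem_Vstar_pair] at hy
        intro hlt
        have hpy : rkpos fH y < rkpos fH h := rkpos_lt_iff.mpr hlt
        have hby : rkpos fH y / k = rkpos fH h / k := by
          rw [hy.1, hdiv'', hb]
        have homy : rkpos fH y % k < rkpos fH h % k := nat_same_div_mod_lt hby hpy
        apply hy.2
        apply min1 d'' y _ hpd''lt
        rw [mem_Sstar_pair]
        refine ⟨by rw [hy.1, hdiv''], by omega⟩
      rw [hemp]
      simp
  have hmem'' : d'' ∈ ((univ.filter fun d' =>
      h ∈ dProps M (Vstar fD fH l k) S d').filter fun y => fD y < fD d) := by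
    simp only [mem_filter, mem_univ, true_and]
    exact ⟨hd''P, rkpos_lt_iff.mp hpd''lt⟩
  have := Finset.card_pos.mpr ⟨d'', hmem''⟩
  omega

lemma mRej_eq_Sstar (hDr : ∀ h, M.rankHD h = fD) (hHr : ∀ d, M.rankDH d = fH)
    (hfD : Function.Injective fD) (hfH : Function.Injective fH)
    (hl : 1 ≤ l) (hk : 1 ≤ k) :
    mRej M (Vstar fD fH l k) = Sstar fD fH l k := by
  have hinfl : ∀ S : Finset (D × H), S ⊆ mStep M (Vstar fD fH l k) S :=
    fun S => Finset.subset_union_left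
  have hcard : Fintype.card D * Fintype.card H = Fintype.card (D × H) :=
    (Fintype.card_prod D H).symm
  have hsub : ∀ n, (mStep M (Vstar fD fH l k))^[n] ∅ ⊆ Sstar fD fH l k := by
    intro n
    induction n with
    | zero => simp
    | succ n ih =>
      rw [Function.iterate_succ_apply']
      exact mStep_sub_Sstar hDr hHr hfD hfH hl hk ih
  have hfix : mStep M (Vstar fD fH l k) (mRej M (Vstar fD fH l k)) =
      mRej M (Vstar fD fH l k) := by
    unfold mRej
    rw [hcard]
    exact iterate_infl_fixed _ hinfl
  exact fixed_eq_Sstar hDr hHr hfD hfH hl hk (hsub _) hfix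

lemma ikMatching_eq_Mustar (hDr : ∀ h, M.rankHD h = fD) (hHr : ∀ d, M.rankDH d = fH)
    (haccD : ∀ d h, M.accD d h) (haccH : ∀ h d, M.accH h d)
    (hfD : Function.Injective fD) (hfH : Function.Injective fH)
    (hl : 1 ≤ l) (hk : 1 ≤ k) :
    ikMatching M (fun _ => l) (fun _ => k) = Mustar fD fH l k := by
  unfold ikMatching
  rw [interviews_eq_Vstar hDr hHr haccD haccH hfD hfH hl hk]
  unfold finalMatch
  rw [mRej_eq_Sstar hDr hHr hfD hfH hl hk]
  ext ⟨d, h⟩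
  simp only [mem_filter, mem_univ, true_and, Mustar,
    dProps_Sstar hHr hfH hl hk d, hKeeps_Sstar hDr hHr hfD hfH hl hk h]
  tauto

end Step2b

/-- The no-blocking-pair condition in purely arithmetic form. -/
def BCond (l k ND NH q p : ℕ) : Prop :=
  (p = k * (q / l) + q % l ∧ q % l < k) ∨
  (q % l < k ∧ k * (q / l) + q % l < NH ∧ k * (q / l) + q % l ≤ p) ∨
  (p % k < l ∧ l * (p / k) + p % k < ND ∧ l * (p / k) + p % k ≤ q)

lemma mustar_symm {l k q p : ℕ} (hl : 0 < l) (hk : 0 < k) :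
    (p = k * (q / l) + q % l ∧ q % l < k) ↔ (q = l * (p / k) + p % k ∧ p % k < l) := by
  constructor
  · rintro ⟨rfl, h2⟩
    have hd := nat_div_of_build hk h2 (b := q / l)
    have hm := nat_mod_of_build hk h2 (b := q / l)
    have h3 := Nat.div_add_mod q l
    have h4 := Nat.mod_lt q hl
    rw [hd, hm]
    exact ⟨by omega, by omega⟩
  · rintro ⟨rfl, h2⟩
    have hd := nat_div_of_build hl h2 (b := p / k)
    have hm := nat_mod_of_build hl h2 (b := p / k)
    have h3 := Nat.div_add_mod p k
    have h4 := Nat.mod_lt p hk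
    rw [hd, hm]
    exact ⟨by omega, by omega⟩

lemma arith_main {l k ND NH : ℕ} (hl : 1 ≤ l) (hk : 1 ≤ k) :
    (∀ q < ND, ∀ p < NH, BCond l k ND NH q p) ↔
      (l = k ∨ (min ND NH ≤ l ∧ min ND NH ≤ k)) := by
  constructor
  · intro hall
    by_contra hno
    push_neg at hno
    obtain ⟨hlk, hmin⟩ := hno
    have hmin' : l < min ND NH ∨ k < min ND NH := by
      rcases Nat.lt_or_ge l (min ND NH) with h | h
      · exact Or.inl h
      · exact Or.inr (hmin h)
    rcases Nat.lt_or_ge k l with hkl | hkl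
    · -- k < l : take q = p = k
      have hk2 : k < min ND NH := by omega
      have hB := hall k (by omega) k (by omega)
      rcases hB with ⟨_, h2⟩ | ⟨h1, _, _⟩ | ⟨_, _, h3⟩
      · rw [Nat.mod_eq_of_lt hkl] at h2; omega
      · rw [Nat.mod_eq_of_lt hkl] at h1; omega
      · rw [Nat.div_self (by omega : 0 < k), Nat.mod_self, mul_one, add_zero] at h3
        omega
    · -- l < k : take q = p = l
      have hlk2 : l < k := by omega
      have hl2 : l < min ND NH := by omega
      have hB := hall l (by omega) l (by omega)
      rcases hB with ⟨h1, _⟩ | ⟨_, _, h3⟩ | ⟨h1, _, _⟩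
      · rw [Nat.div_self (by omega : 0 < l), Nat.mod_self, mul_one, add_zero] at h1
        omega
      · rw [Nat.div_self (by omega : 0 < l), Nat.mod_self, mul_one, add_zero] at h3
        omega
      · rw [Nat.mod_eq_of_lt hlk2] at h1; omega
  · intro hor q hq p hp
    unfold BCond
    rcases hor with heq | ⟨h1, h2⟩
    · subst heq
      have hq1 := Nat.div_add_mod q l
      have hp1 := Nat.div_add_mod p l
      have hq2 := Nat.mod_lt q (by omega : 0 < l)
      have hp2 := Nat.mod_lt p (by omega : 0 < l)
      rcases lt_trichotomy q p with h | h | h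
      · exact Or.inr (Or.inl ⟨by omega, by omega, by omega⟩)
      · exact Or.inl ⟨by omega, by omega⟩
      · exact Or.inr (Or.inr ⟨by omega, by omega, by omega⟩)
    · rcases le_total ND NH with hle | hle
      · have hND : ND ≤ l ∧ ND ≤ k := by omega
        have hq3 : q / l = 0 := Nat.div_eq_of_lt (by omega)
        have hq4 : q % l = q := Nat.mod_eq_of_lt (by omega)
        rcases Nat.lt_or_ge p q with hpq | hpq
        · have hp3 : p / k = 0 := Nat.div_eq_of_lt (by omega)
          have hp4 : p % k = p := Nat.mod_eq_of_lt (by omega)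
          refine Or.inr (Or.inr ?_)
          rw [hp3, hp4, mul_zero, zero_add]
          exact ⟨by omega, by omega, by omega⟩
        · refine Or.inr (Or.inl ?_)
          rw [hq3, hq4, mul_zero, zero_add]
          exact ⟨by omega, by omega, by omega⟩
      · have hNH : NH ≤ l ∧ NH ≤ k := by omega
        have hp3 : p / k = 0 := Nat.div_eq_of_lt (by omega)
        have hp4 : p % k = p := Nat.mod_eq_of_lt (by omega)
        rcases Nat.lt_or_ge q p with hqp | hqp
        · have hq3 : q / l = 0 := Nat.div_eq_of_lt (by omega)
          have hq4 : q % l = q := Nat.mod_eq_of_lt (by omega)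
          refine Or.inr (Or.inl ?_)
          rw [hq3, hq4, mul_zero, zero_add]
          exact ⟨by omega, by omega, by omega⟩
        · refine Or.inr (Or.inr ?_)
          rw [hp3, hp4, mul_zero, zero_add]
          exact ⟨by omega, by omega, by omega⟩

section Stability
variable {D H : Type*} [Fintype D] [Fintype H] [DecidableEq D] [DecidableEq H]
variable {M : Market D H} {fD : D → ℕ} {fH : H → ℕ} {l k : ℕ}

lemma mem_Mustar_pair {d : D} {h : H} :
    (d, h) ∈ Mustar fD fH l k ↔
      (rkpos fH h = k * (rkpos fD d / l) + rkpos fD d % l ∧ rkpos fD d % l < k) := by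
  simp [Mustar]

lemma not_blocks_iff (hDr : ∀ h, M.rankHD h = fD) (hHr : ∀ d, M.rankDH d = fH)
    (haccD : ∀ d h, M.accD d h) (haccH : ∀ h d, M.accH h d)
    (hfD : Function.Injective fD) (hfH : Function.Injective fH)
    (hl : 1 ≤ l) (hk : 1 ≤ k) (d : D) (h : H) :
    ¬ Blocks M (Mustar fD fH l k) d h ↔
      BCond l k (Fintype.card D) (Fintype.card H) (rkpos fD d) (rkpos fH h) := by
  constructor
  · intro hnb
    by_contra hC
    apply hnb
    unfold BCond at hC
    push_neg at hC
    obtain ⟨hC1, hC2, hC3⟩ := hC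
    refine ⟨haccD d h, haccH h d, ?_, ?_, ?_⟩
    · intro hmem
      have hm := mem_Mustar_pair.mp hmem
      have := hC1 hm.1
      omega
    · intro h' hm
      rw [mem_Mustar_pair] at hm
      obtain ⟨hm1, hm2⟩ := hm
      rw [hHr d]
      have hcard := rkpos_lt_card (f := fH) h'
      have hx := hC2 hm2 (by omega)
      exact rkpos_lt_iff.mp (by omega)
    · intro d' hm
      rw [mem_Mustar_pair] at hm
      rw [mustar_symm hl hk] at hm
      obtain ⟨hm1, hm2⟩ := hm
      rw [hDr h]
      have hcard := rkpos_lt_card (f := fD) d'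
      have hx := hC3 hm2 (by omega)
      exact rkpos_lt_iff.mp (by omega)
  · intro hC hB
    obtain ⟨_, _, hnm, hA, hB'⟩ := hB
    rw [hHr d] at hA
    rw [hDr h] at hB'
    rcases hC with ⟨h1, h2⟩ | ⟨h1, h2, h3⟩ | ⟨h1, h2, h3⟩
    · exact hnm (mem_Mustar_pair.mpr ⟨h1, h2⟩)
    · obtain ⟨h', hh'⟩ := exists_rkpos hfH h2
      have hm : (d, h') ∈ Mustar fD fH l k := mem_Mustar_pair.mpr ⟨hh', h1⟩
      have hlt : rkpos fH h < rkpos fH h' := rkpos_lt_iff.mpr (hA h' hm)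
      omega
    · obtain ⟨d', hd'⟩ := exists_rkpos hfD h2
      have hm : (d', h) ∈ Mustar fD fH l k :=
        mem_Mustar_pair.mpr ((mustar_symm hl hk).mpr ⟨hd', h1⟩)
      have hlt : rkpos fD d < rkpos fD d' := rkpos_lt_iff.mpr (hB' d' hm)
      omega

lemma stable_iff (hDr : ∀ h, M.rankHD h = fD) (hHr : ∀ d, M.rankDH d = fH)
    (haccD : ∀ d h, M.accD d h) (haccH : ∀ h d, M.accH h d)
    (hfD : Function.Injective fD) (hfH : Function.Injective fH)
    (hl : 1 ≤ l) (hk : 1 ≤ k) :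
    Stable M (Mustar fD fH l k) ↔
      ∀ q < Fintype.card D, ∀ p < Fintype.card H,
        BCond l k (Fintype.card D) (Fintype.card H) q p := by
  constructor
  · intro hs q hq p hp
    obtain ⟨d, rfl⟩ := exists_rkpos hfD hq
    obtain ⟨h, rfl⟩ := exists_rkpos hfH hp
    exact (not_blocks_iff hDr hHr haccD haccH hfD hfH hl hk d h).mp (hs d h)
  · intro hall d h
    exact (not_blocks_iff hDr hHr haccD haccH hfD hfH hl hk d h).mpr
      (hall _ (rkpos_lt_card d) _ (rkpos_lt_card h))

end Stability

/-- Under common preferences, a homogeneous arrangement `(l,k)` is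
adequate if and only if `l = k` or both `l, k ≥ min {|D|, |H|}`. -/
theorem homogeneous_adequate_iff
    (M : Market D H) (hM : CommonPrefs M)
    (l k : ℕ) (hl : 1 ≤ l) (hk : 1 ≤ k) :
    Adequate M (fun _ => l) (fun _ => k) ↔
      (l = k ∨ (min (Fintype.card D) (Fintype.card H) ≤ l ∧
                 min (Fintype.card D) (Fintype.card H) ≤ k)) := by
  by_cases hDe : IsEmpty D
  · have hcD : Fintype.card D = 0 := Fintype.card_eq_zero
    apply iff_of_true
    · intro d h _
      exact hDe.elim d
    · right
      constructor <;> omega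
  by_cases hHe : IsEmpty H
  · have hcH : Fintype.card H = 0 := Fintype.card_eq_zero
    apply iff_of_true
    · intro d h _
      exact hHe.elim h
    · right
      constructor <;> omega
  obtain ⟨d₀⟩ := not_isEmpty_iff.mp hDe
  obtain ⟨h₀⟩ := not_isEmpty_iff.mp hHe
  obtain ⟨⟨hinjH, hinjD⟩, hcomD, hcomH, hacc⟩ := hM
  have hDr : ∀ h, M.rankHD h = M.rankHD h₀ := fun h => hcomH h h₀
  have hHr : ∀ d, M.rankDH d = M.rankDH d₀ := fun d => hcomD d d₀
  have haccD : ∀ d h, M.accD d h := fun d h => (hacc d h).1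
  have haccH : ∀ h d, M.accH h d := fun h d => (hacc d h).2
  have hfD : Function.Injective (M.rankHD h₀) := hinjD h₀
  have hfH : Function.Injective (M.rankDH d₀) := hinjH d₀
  unfold Adequate
  rw [ikMatching_eq_Mustar hDr hHr haccD haccH hfD hfH hl hk,
    stable_iff hDr hHr haccD haccH hfD hfH hl hk]
  exact arith_main hl hk
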